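/- arXiv:0907.1647 — 4 statements merged into one kernel-verified Lean document; each statement's English description precedes it below -/
import Mathlib

section
/- If s and t are positive reals with s + t > 1, s ≠ 1 and t ≠ 1, then h_a = (1/(6(t-1)))(st + t - 2s - 1 + sqrt((t-1)^2 + s^2(t^2 - t + 1) - s(t^2 - 3t + 2))) lies strictly between 1/2 and s/2. -/
lemma sqrt_gt_of_sq_lt {b d : ℝ} (h : b ^ 2 < d) : b < Real.sqrt d := by
  calc b ≤ |b| := le_abs_self b
    _ = Real.sqrt (b ^ 2) := (Real.sqrt_sq_eq_abs b).symm
    _ < Real.sqrt d := Real.sqrt_lt_sqrt (sq_nonneg b) h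

lemma sqrt_lt_of_lt_sq {b d : ℝ} (hd : 0 ≤ d) (hb : 0 < b) (h : d < b ^ 2) :
    Real.sqrt d < b := by
  have := Real.sqrt_lt_sqrt hd h
  rwa [Real.sqrt_sq hb.le] at this

theorem ha_between (s t : ℝ) (hs : 0 < s) (ht : 0 < t) (hst : s + t > 1)
    (hs1 : s ≠ 1) (ht1 : t ≠ 1) :
    (1 / (6 * (t - 1))) * (s * t + t - 2 * s - 1 +
      Real.sqrt ((t - 1) ^ 2 + s ^ 2 * (t ^ 2 - t + 1) - s * (t ^ 2 - 3 * t + 2)))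
      ∈ Set.Ioo (min (1 / 2) (s / 2)) (max (1 / 2) (s / 2)) := by
  set D := (t - 1) ^ 2 + s ^ 2 * (t ^ 2 - t + 1) - s * (t ^ 2 - 3 * t + 2) with hD
  have idA : D - (2*t + 2*s - s*t - 2) ^ 2 = 3 * ((t-1) * (s-1) * (s+t-1)) := by
    rw [hD]; ring
  have idB : D - (2*s*t - t - s + 1) ^ 2 = -(3 * (s * t * (s-1) * (t-1))) := by
    rw [hD]; ring
  have hrw : (1 / (6 * (t - 1))) * (s * t + t - 2 * s - 1 + Real.sqrt D)
      = (s * t + t - 2 * s - 1 + Real.sqrt D) / (6 * (t - 1)) := by ring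
  rw [Set.mem_Ioo, hrw]
  rcases hs1.lt_or_gt with hslt | hsgt
  · -- s < 1
    have hmin : min (1/2 : ℝ) (s/2) = s/2 := min_eq_right (by linarith)
    have hmax : max (1/2 : ℝ) (s/2) = 1/2 := max_eq_left (by linarith)
    rw [hmin, hmax]
    rcases ht1.lt_or_gt with htlt | htgt
    · -- t < 1, so t-1 < 0, (s-1)(t-1) > 0
      have h6 : 6 * (t - 1) < 0 := by linarith
      have hP1 : 0 < (1-t) * (1-s) := mul_pos (by linarith) (by linarith)
      have hP2 : 0 < s * t * ((1-s) * (1-t)) :=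
        mul_pos (mul_pos hs ht) (mul_pos (by linarith) (by linarith))
      have hP3 : 0 < (1-t) * (1-s) * (s+t-1) := mul_pos hP1 (by linarith)
      constructor
      · -- s/2 < h ⇔ E + √D < 3s(t-1) ⇔ √D < B
        have hBpos : 0 < 2*s*t - t - s + 1 := by linarith [hP1]
        have hDnn : 0 ≤ D := by linarith [idA, hP3, sq_nonneg (2*t + 2*s - s*t - 2)]
        have hDlt : D < (2*s*t - t - s + 1) ^ 2 := by linarith [idB, hP2]
        have key := sqrt_lt_of_lt_sq hDnn hBpos hDlt
        rw [lt_div_iff_of_neg h6]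
        linarith [key]
      · -- h < 1/2 ⇔ E + √D > 3(t-1) ⇔ √D > A
        have key : (2*t + 2*s - s*t - 2) < Real.sqrt D :=
          sqrt_gt_of_sq_lt (by linarith [idA, hP3])
        rw [div_lt_iff_of_neg h6]
        linarith [key]
    · -- t > 1
      have h6 : 0 < 6 * (t - 1) := by linarith
      have hP1 : 0 < (1-s) * (t-1) := mul_pos (by linarith) (by linarith)
      have hP2 : 0 < s * t * ((1-s) * (t-1)) := mul_pos (mul_pos hs ht) hP1
      have hP3 : 0 < (t-1) * (1-s) * (s+t-1) :=
        mul_pos (mul_pos (by linarith) (by linarith)) (by linarith)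
      constructor
      · -- s/2 < h ⇔ √D > B
        have key : (2*s*t - t - s + 1) < Real.sqrt D :=
          sqrt_gt_of_sq_lt (by linarith [idB, hP2])
        rw [lt_div_iff₀ h6]
        linarith [key]
      · -- h < 1/2 ⇔ √D < A
        have hApos : 0 < 2*t + 2*s - s*t - 2 := by linarith [hP1]
        have hDnn : 0 ≤ D := by linarith [idB, hP2, sq_nonneg (2*s*t - t - s + 1)]
        have hDlt : D < (2*t + 2*s - s*t - 2) ^ 2 := by linarith [idA, hP3]
        have key := sqrt_lt_of_lt_sq hDnn hApos hDlt
        rw [div_lt_iff₀ h6]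
        linarith [key]
  · -- s > 1
    have hmin : min (1/2 : ℝ) (s/2) = 1/2 := min_eq_left (by linarith)
    have hmax : max (1/2 : ℝ) (s/2) = s/2 := max_eq_right (by linarith)
    rw [hmin, hmax]
    rcases ht1.lt_or_gt with htlt | htgt
    · -- t < 1, (s-1)(t-1) < 0
      have h6 : 6 * (t - 1) < 0 := by linarith
      have hP1 : 0 < (s-1) * (1-t) := mul_pos (by linarith) (by linarith)
      have hP2 : 0 < s * t * ((s-1) * (1-t)) := mul_pos (mul_pos hs ht) hP1
      have hP3 : 0 < (1-t) * (s-1) * (s+t-1) :=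
        mul_pos (mul_pos (by linarith) (by linarith)) (by linarith)
      constructor
      · -- 1/2 < h ⇔ E + √D < 3(t-1) ⇔ √D < A
        have hApos : 0 < 2*t + 2*s - s*t - 2 := by linarith [hP1]
        have hDnn : 0 ≤ D := by linarith [idB, hP2, sq_nonneg (2*s*t - t - s + 1)]
        have hDlt : D < (2*t + 2*s - s*t - 2) ^ 2 := by linarith [idA, hP3]
        have key := sqrt_lt_of_lt_sq hDnn hApos hDlt
        rw [lt_div_iff_of_neg h6]
        linarith [key]
      · -- h < s/2 ⇔ E + √D > 3s(t-1) ⇔ √D > B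
        have key : (2*s*t - t - s + 1) < Real.sqrt D :=
          sqrt_gt_of_sq_lt (by linarith [idB, hP2])
        rw [div_lt_iff_of_neg h6]
        linarith [key]
    · -- t > 1, (s-1)(t-1) > 0
      have h6 : 0 < 6 * (t - 1) := by linarith
      have hP1 : 0 < (s-1) * (t-1) := mul_pos (by linarith) (by linarith)
      have hP2 : 0 < s * t * ((s-1) * (t-1)) := mul_pos (mul_pos hs ht) hP1
      have hP3 : 0 < (t-1) * (s-1) * (s+t-1) :=
        mul_pos (mul_pos (by linarith) (by linarith)) (by linarith)
      constructor
      · -- 1/2 < h ⇔ √D > A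
        have key : (2*t + 2*s - s*t - 2) < Real.sqrt D :=
          sqrt_gt_of_sq_lt (by linarith [idA, hP3])
        rw [lt_div_iff₀ h6]
        linarith [key]
      · -- h < s/2 ⇔ √D < B
        have hBpos : 0 < 2*s*t - t - s + 1 := by linarith [hP1]
        have hDnn : 0 ≤ D := by linarith [idA, hP3, sq_nonneg (2*t + 2*s - s*t - 2)]
        have hDlt : D < (2*s*t - t - s + 1) ^ 2 := by linarith [idB, hP2]
        have key := sqrt_lt_of_lt_sq hDnn hBpos hDlt
        rw [div_lt_iff₀ h6]
        linarith [key]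
end

section
/- For 0 < w < 1, define z(w) = ((1-2w)(2-w)(1+w) + 2(w^2-w+1)^{3/2}) / (1-w)^2. Then z(w) < 27/4 for all w in (0,1). -/
theorem z_lt (w : ℝ) (hw : w ∈ Set.Ioo (0 : ℝ) 1) :
    ((1 - 2 * w) * (2 - w) * (1 + w) + 2 * (w ^ 2 - w + 1) ^ ((3 : ℝ) / 2))
      / (1 - w) ^ 2 < 27 / 4 := by
  obtain ⟨h0, h1⟩ := hw
  have hw1 : (0:ℝ) < 1 - w := by linarith
  set s : ℝ := w ^ 2 - w + 1 with hs_def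
  have hs : (0:ℝ) < s := by nlinarith [sq_nonneg (w-1)]
  set p : ℝ := s ^ ((3:ℝ)/2) with hp_def
  have hp0 : 0 ≤ p := Real.rpow_nonneg hs.le _
  have hpsq : p ^ 2 = s ^ 3 := by
    rw [hp_def, ← Real.rpow_natCast (s ^ ((3:ℝ)/2)) 2, ← Real.rpow_mul hs.le,
      show ((3:ℝ)/2) * (2:ℕ) = ((3:ℕ):ℝ) by norm_num, Real.rpow_natCast]
  set R : ℝ := 27/4 * (1-w)^2 - (1 - 2*w) * (2-w) * (1+w) with hR_def
  have hRpos : 0 < R := by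
    rw [hR_def]; nlinarith [sq_nonneg (w - 7/10), sq_nonneg w, sq_nonneg (1-w)]
  have hkey : 4 * s ^ 3 < R ^ 2 := by
    rw [hR_def, hs_def]
    nlinarith [mul_pos (mul_pos h0 (pow_pos hw1 3)) (show (0:ℝ) < 432*w^2 - 513*w + 297 by nlinarith [sq_nonneg (w - 513/864)])]
  have h2p : 2 * p < R := by nlinarith
  rw [div_lt_iff₀ (by positivity)]
  rw [hR_def] at h2p
  linarith
end

section
/- The function z(w) = ((1-2w)(2-w)(1+w) + 2(w^2-w+1)^{3/2})/(1-w)^2 has no critical point in (0,1): its derivative z'(w) = (2w^3 - 6w^2 + 9w - 1 + (2w^2 - 5w - 1)sqrt(w^2-w+1))/(w-1)^3 never vanishes for 0 < w < 1. -/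
theorem z_no_critical_point
    (z : ℝ → ℝ)
    (hz : ∀ w, z w = ((1 - 2 * w) * (2 - w) * (1 + w)
        + 2 * (w ^ 2 - w + 1) ^ ((3 : ℝ) / 2)) / (1 - w) ^ 2) :
    ∀ w ∈ Set.Ioo (0 : ℝ) 1,
      deriv z w = (2 * w ^ 3 - 6 * w ^ 2 + 9 * w - 1
          + (2 * w ^ 2 - 5 * w - 1) * Real.sqrt (w ^ 2 - w + 1)) / (w - 1) ^ 3 ∧
      (2 * w ^ 3 - 6 * w ^ 2 + 9 * w - 1
          + (2 * w ^ 2 - 5 * w - 1) * Real.sqrt (w ^ 2 - w + 1)) / (w - 1) ^ 3 ≠ 0 := by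
  have hzf : z = fun w => ((1 - 2 * w) * (2 - w) * (1 + w)
      + 2 * (w ^ 2 - w + 1) ^ ((3 : ℝ) / 2)) / (1 - w) ^ 2 := funext hz
  rintro w ⟨hw0, hw1⟩
  have hg : (0:ℝ) < w ^ 2 - w + 1 := by nlinarith
  set s := Real.sqrt (w ^ 2 - w + 1) with hs
  have hs2 : s ^ 2 = w ^ 2 - w + 1 := Real.sq_sqrt hg.le
  have hspos : 0 < s := Real.sqrt_pos.mpr hg
  have h1w : (1 : ℝ) - w ≠ 0 := by linarith
  have hden : ((1 : ℝ) - w) ^ 2 ≠ 0 := pow_ne_zero _ h1w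
  -- derivative computation
  have hid : HasDerivAt (fun x : ℝ => x) 1 w := hasDerivAt_id w
  have h1 : HasDerivAt (fun x : ℝ => 1 - 2 * x) (-2) w := by
    simpa using (hid.const_mul 2).const_sub 1
  have h2 : HasDerivAt (fun x : ℝ => 2 - x) (-1) w := by
    simpa using hid.const_sub 2
  have h3 : HasDerivAt (fun x : ℝ => 1 + x) 1 w := by
    simpa using hid.const_add 1
  have hP : HasDerivAt (fun x : ℝ => (1 - 2 * x) * (2 - x) * (1 + x))
      (6 * w ^ 2 - 6 * w - 3) w := by
    have := (h1.fun_mul h2).fun_mul h3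
    refine this.congr_deriv ?_
    ring
  have hgd : HasDerivAt (fun x : ℝ => x ^ 2 - x + 1) (2 * w - 1) w := by
    have := ((hasDerivAt_pow 2 w).fun_sub hid).add_const 1
    refine this.congr_deriv ?_
    simp
  have hrpow : HasDerivAt (fun x : ℝ => (x ^ 2 - x + 1) ^ ((3 : ℝ) / 2))
      ((2 * w - 1) * (3 / 2) * (w ^ 2 - w + 1) ^ ((3 : ℝ) / 2 - 1)) w :=
    hgd.rpow_const (Or.inr (by norm_num))
  have hnum : HasDerivAt (fun x : ℝ => (1 - 2 * x) * (2 - x) * (1 + x)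
      + 2 * (x ^ 2 - x + 1) ^ ((3 : ℝ) / 2))
      ((6 * w ^ 2 - 6 * w - 3) + 2 * ((2 * w - 1) * (3 / 2) * (w ^ 2 - w + 1) ^ ((3 : ℝ) / 2 - 1))) w :=
    hP.add (hrpow.const_mul 2)
  have hdend : HasDerivAt (fun x : ℝ => (1 - x) ^ 2) (2 * (1 - w) ^ 1 * (-1)) w :=
    (hid.const_sub 1).pow 2
  have hdiv := hnum.fun_div hdend hden
  have hderiv := hdiv.deriv
  rw [← hzf] at hderiv
  have e2 : (w ^ 2 - w + 1 : ℝ) ^ ((3 : ℝ) / 2 - 1) = s := by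
    rw [hs, Real.sqrt_eq_rpow]
    norm_num
  have e1 : (w ^ 2 - w + 1 : ℝ) ^ ((3 : ℝ) / 2) = (w ^ 2 - w + 1) * s := by
    rw [show (3 : ℝ) / 2 = 1 + 1 / 2 by norm_num, Real.rpow_add hg, Real.rpow_one,
      hs, Real.sqrt_eq_rpow]
  have hderiv' : deriv z w = (2 * w ^ 3 - 6 * w ^ 2 + 9 * w - 1
      + (2 * w ^ 2 - 5 * w - 1) * s) / (w - 1) ^ 3 := by
    rw [hderiv, e1, e2]
    have hw1' : (w : ℝ) - 1 ≠ 0 := by linarith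
    field_simp
    ring
  refine ⟨hderiv', ?_⟩
  -- nonvanishing: numerator is negative
  have hB : 2 * w ^ 2 - 5 * w - 1 < 0 := by nlinarith
  have hBs : (2 * w ^ 2 - 5 * w - 1) * s < 0 := mul_neg_of_neg_of_pos hB hspos
  have key : (2 * w ^ 3 - 6 * w ^ 2 + 9 * w - 1) ^ 2
      < ((2 * w ^ 2 - 5 * w - 1) * s) ^ 2 := by
    have h27 : (2 * w ^ 3 - 6 * w ^ 2 + 9 * w - 1) ^ 2
        - (2 * w ^ 2 - 5 * w - 1) ^ 2 * (w ^ 2 - w + 1) = 27 * w * (w - 1) ^ 3 := by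
      ring
    nlinarith [hs2, mul_pos (mul_pos (by norm_num : (0:ℝ) < 27) hw0)
      (pow_pos (by linarith : (0:ℝ) < 1 - w) 3)]
  have hN : 2 * w ^ 3 - 6 * w ^ 2 + 9 * w - 1 + (2 * w ^ 2 - 5 * w - 1) * s < 0 := by
    nlinarith [key, hBs]
  have hd3 : ((w : ℝ) - 1) ^ 3 ≠ 0 := pow_ne_zero _ (by linarith)
  exact div_ne_zero (ne_of_lt hN) hd3
end

section
/- Let Q(z) = z(z-1)(z-(1+2i))(z-2i). Then the roots of Q''(z) are 1/2 + (1/2)i and 1/2 + (3/2)i. In particular these differ from the foci of the maximal-area ellipse inscribed in the rectangle with vertices 0, 1, 1+2i, 2i, which are 1/2 + (1 + sqrt(3)/2)i and 1/2 + (1 - sqrt(3)/2)i. -/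
open Complex

lemma H1 : ∀ z : ℂ, HasDerivAt (fun z : ℂ => z * (z - 1) * (z - (1 + 2 * I)) * (z - 2 * I))
    (4 * z ^ 3 - 3 * (2 + 4 * I) * z ^ 2 + (-6 + 12 * I) * z + (4 - 2 * I)) z := by
  intro z
  have h := (((hasDerivAt_id z).mul ((hasDerivAt_id z).sub_const 1)).mul
      ((hasDerivAt_id z).sub_const (1 + 2 * I))).mul ((hasDerivAt_id z).sub_const (2 * I))
  refine h.congr_deriv ?_
  simp only [id, Pi.mul_apply]
  ring_nf
  simp only [I_sq]
  ring

lemma H2 : ∀ z : ℂ, HasDerivAt (fun z : ℂ =>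
    4 * z ^ 3 - 3 * (2 + 4 * I) * z ^ 2 + (-6 + 12 * I) * z + (4 - 2 * I))
    (12 * z ^ 2 - (12 + 24 * I) * z + (-6 + 12 * I)) z := by
  intro z
  have h := ((((hasDerivAt_pow 3 z).const_mul (4 : ℂ)).sub
      ((hasDerivAt_pow 2 z).const_mul (3 * (2 + 4 * I)))).add
      ((hasDerivAt_id z).const_mul (-6 + 12 * I))).add_const (4 - 2 * I)
  refine h.congr_deriv ?_
  ring

open Complex in
theorem roots_Q'' :
    {z : ℂ | deriv (deriv (fun z : ℂ =>
        z * (z - 1) * (z - (1 + 2 * I)) * (z - 2 * I))) z = 0}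
      = {1 / 2 + (1 / 2) * I, 1 / 2 + (3 / 2) * I} ∧
    ({1 / 2 + (1 / 2) * I, 1 / 2 + (3 / 2) * I} : Set ℂ)
      ≠ {1 / 2 + (1 + Real.sqrt 3 / 2) * I, 1 / 2 + (1 - Real.sqrt 3 / 2) * I} := by
  constructor
  · have hd1 : deriv (fun z : ℂ => z * (z - 1) * (z - (1 + 2 * I)) * (z - 2 * I)) =
        fun z : ℂ => 4 * z ^ 3 - 3 * (2 + 4 * I) * z ^ 2 + (-6 + 12 * I) * z + (4 - 2 * I) := by
      funext z; exact (H1 z).deriv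
    rw [hd1]
    ext z
    have hd2 : deriv (fun z : ℂ =>
        4 * z ^ 3 - 3 * (2 + 4 * I) * z ^ 2 + (-6 + 12 * I) * z + (4 - 2 * I)) z =
        12 * z ^ 2 - (12 + 24 * I) * z + (-6 + 12 * I) := (H2 z).deriv
    simp only [Set.mem_setOf_eq, hd2, Set.mem_insert_iff, Set.mem_singleton_iff]
    constructor
    · intro h
      have hfac : (12 : ℂ) * ((z - (1 / 2 + (1 / 2) * I)) * (z - (1 / 2 + (3 / 2) * I))) = 0 := by
        linear_combination h + 9 * I_sq
      have h12 : (12 : ℂ) ≠ 0 := by norm_num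
      rcases mul_eq_zero.mp hfac with h0 | h0
      · exact absurd h0 h12
      · rcases mul_eq_zero.mp h0 with h1 | h1
        · left; exact sub_eq_zero.mp h1
        · right; exact sub_eq_zero.mp h1
    · rintro (rfl | rfl) <;> linear_combination (-9 : ℂ) * I_sq
  · intro h
    have hmem : (1 / 2 + (1 / 2) * I : ℂ) ∈
        ({1 / 2 + (1 + Real.sqrt 3 / 2) * I, 1 / 2 + (1 - Real.sqrt 3 / 2) * I} : Set ℂ) := by
      rw [← h]; left; rfl
    have h3 : (1 : ℝ) < Real.sqrt 3 := by
      have : (1 : ℝ) = Real.sqrt 1 := (Real.sqrt_one).symm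
      rw [this]; exact Real.sqrt_lt_sqrt (by norm_num) (by norm_num)
    rcases hmem with heq | heq
    · have := congrArg Complex.im heq
      simp at this
      nlinarith [Real.sqrt_nonneg 3]
    · have := congrArg Complex.im heq
      simp at this
      nlinarith
end
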